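/- With f and g as in the SCA surrogate construction (f(γ) = −(qᴴγ + γᵀBγ)*(qᴴγ + γᵀBγ) and g the surrogate defined at point γ_i with parameter K), the gradients of f and g with respect to (Re γ, Im γ) coincide at γ = γ_i; equivalently ∂f/∂γ*|_{γ=γ_i} = ∂g/∂γ*|_{γ=γ_i} in the sense of Wirtinger calculus. -/

import Mathlib

open Matrix

/-- The surrogate matrix `Q_i = q qᴴ + q γ_iᵀ B + Bᴴ γ_i* qᴴ + Bᴴ γ_i* γ_iᵀ B`. -/
noncomputable def Qmat {N : ℕ} (q γi : Fin N → ℂ) (B : Matrix (Fin N) (Fin N) ℂ) :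
    Matrix (Fin N) (Fin N) ℂ :=
  vecMulVec q (star q) + vecMulVec q γi * B + Bᴴ * vecMulVec (star γi) (star q) +
    Bᴴ * vecMulVec (star γi) γi * B

/-- Objective `f(γ) = −(qᴴγ + γᵀBγ)*(qᴴγ + γᵀBγ) = −|qᴴγ + γᵀBγ|²`. -/
noncomputable def fObj {N : ℕ} (q : Fin N → ℂ) (B : Matrix (Fin N) (Fin N) ℂ)
    (γ : Fin N → ℂ) : ℝ :=
  -Complex.normSq (star q ⬝ᵥ γ + γ ⬝ᵥ B.mulVec γ)

/-- The SCA surrogate function `g(γ|γ_i)`. -/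
noncomputable def gSurr {N : ℕ} (q γi : Fin N → ℂ) (B : Matrix (Fin N) (Fin N) ℂ)
    (K : ℝ) (γ : Fin N → ℂ) : ℂ :=
  -(star γ ⬝ᵥ (Qmat q γi B).mulVec γ)
    + (K : ℂ) * ∑ j, (Complex.normSq (γ j - γi j) : ℂ)
    - (star γi ⬝ᵥ q) * (γ ⬝ᵥ B.mulVec γi)
    - (star γi ⬝ᵥ Bᴴ.mulVec (star γ)) * (star q ⬝ᵥ γi)
    - (star γi ⬝ᵥ Bᴴ.mulVec (star γ)) * (γi ⬝ᵥ B.mulVec γi)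
    - (star γi ⬝ᵥ Bᴴ.mulVec (star γi)) * (γ ⬝ᵥ B.mulVec γi)


section Helpers
variable {N : ℕ}

noncomputable def dotCLM (w : Fin N → ℂ) : (Fin N → ℂ) →L[ℝ] ℂ :=
  ∑ j, w j • (ContinuousLinearMap.proj j : (Fin N → ℂ) →L[ℝ] ℂ)

@[simp] lemma dotCLM_apply (w ε : Fin N → ℂ) : dotCLM w ε = w ⬝ᵥ ε := by
  simp [dotCLM, dotProduct]

noncomputable def starPi : (Fin N → ℂ) →L[ℝ] (Fin N → ℂ) :=
  ContinuousLinearMap.pi fun j =>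
    (Complex.conjCLE.toContinuousLinearMap).comp
      (ContinuousLinearMap.proj j : (Fin N → ℂ) →L[ℝ] ℂ)

@[simp] lemma starPi_apply (ε : Fin N → ℂ) : starPi ε = star ε := by
  funext j; simp [starPi]

lemma hasFDerivAt_dot (w x : Fin N → ℂ) :
    HasFDerivAt (fun γ : Fin N → ℂ => w ⬝ᵥ γ) (dotCLM w) x := by
  have h : (fun γ : Fin N → ℂ => w ⬝ᵥ γ) = ⇑(dotCLM w) := by
    funext γ; simp
  rw [h]; exact (dotCLM w).hasFDerivAt

lemma hasFDerivAt_dotLeft (w x : Fin N → ℂ) :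
    HasFDerivAt (fun γ : Fin N → ℂ => γ ⬝ᵥ w) (dotCLM w) x := by
  have h : (fun γ : Fin N → ℂ => γ ⬝ᵥ w) = fun γ : Fin N → ℂ => w ⬝ᵥ γ := by
    funext γ; rw [dotProduct_comm]
  rw [h]; exact hasFDerivAt_dot w x

lemma hasFDerivAt_dotStar (w x : Fin N → ℂ) :
    HasFDerivAt (fun γ : Fin N → ℂ => w ⬝ᵥ star γ) ((dotCLM w).comp starPi) x := by
  have h : (fun γ : Fin N → ℂ => w ⬝ᵥ star γ) = ⇑((dotCLM w).comp starPi) := by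
    funext γ; simp
  rw [h]; exact ((dotCLM w).comp starPi).hasFDerivAt

-- quadratic form γ ⬝ᵥ B γ
lemma hasFDerivAt_quad (B : Matrix (Fin N) (Fin N) ℂ) (x : Fin N → ℂ) :
    HasFDerivAt (fun γ : Fin N → ℂ => γ ⬝ᵥ B.mulVec γ)
      (dotCLM (B.vecMul x) + dotCLM (B.mulVec x)) x := by
  have h : ∀ j : Fin N, HasFDerivAt (fun γ : Fin N → ℂ => γ j * ((fun k => B j k) ⬝ᵥ γ))
      (x j • dotCLM (fun k => B j k)
        + ((fun k => B j k) ⬝ᵥ x) • (ContinuousLinearMap.proj j : (Fin N → ℂ) →L[ℝ] ℂ)) x :=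
    fun j => ((ContinuousLinearMap.proj j : (Fin N → ℂ) →L[ℝ] ℂ).hasFDerivAt).mul
      (hasFDerivAt_dot _ x)
  have hfun : (fun γ : Fin N → ℂ => γ ⬝ᵥ B.mulVec γ)
      = fun γ => ∑ j, γ j * ((fun k => B j k) ⬝ᵥ γ) := by
    funext γ; simp [dotProduct, mulVec]
  rw [hfun]
  have hsum := HasFDerivAt.fun_sum (u := Finset.univ) (fun j _ => h j)
  refine hsum.congr_fderiv (Eq.symm ?_)
  ext ε
  simp only [ContinuousLinearMap.add_apply, dotCLM_apply, ContinuousLinearMap.sum_apply,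
    ContinuousLinearMap.smul_apply, ContinuousLinearMap.proj_apply, smul_eq_mul]
  rw [Finset.sum_add_distrib]
  congr 1
  · simp only [vecMul, dotProduct, Matrix.transpose_apply, Finset.sum_mul, Finset.mul_sum]
    rw [Finset.sum_comm]
    exact Finset.sum_congr rfl fun j _ => Finset.sum_congr rfl fun k _ => by ring


lemma hasFDerivAt_starQuad (M : Matrix (Fin N) (Fin N) ℂ) (x : Fin N → ℂ) :
    HasFDerivAt (fun γ : Fin N → ℂ => star γ ⬝ᵥ M.mulVec γ)
      (dotCLM (M.vecMul (star x)) + (dotCLM (M.mulVec x)).comp starPi) x := by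
  have hcj : ∀ j : Fin N, HasFDerivAt (fun γ : Fin N → ℂ => (starRingEnd ℂ) (γ j))
      ((Complex.conjCLE.toContinuousLinearMap).comp
        (ContinuousLinearMap.proj j : (Fin N → ℂ) →L[ℝ] ℂ)) x := by
    intro j
    have h : (fun γ : Fin N → ℂ => (starRingEnd ℂ) (γ j))
        = ⇑((Complex.conjCLE.toContinuousLinearMap).comp
            (ContinuousLinearMap.proj j : (Fin N → ℂ) →L[ℝ] ℂ)) := by
      funext γ; simp
    rw [h]; exact ContinuousLinearMap.hasFDerivAt _
  have h : ∀ j : Fin N, HasFDerivAt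
      (fun γ : Fin N → ℂ => (starRingEnd ℂ) (γ j) * ((fun k => M j k) ⬝ᵥ γ))
      ((starRingEnd ℂ) (x j) • dotCLM (fun k => M j k)
        + ((fun k => M j k) ⬝ᵥ x) • ((Complex.conjCLE.toContinuousLinearMap).comp
            (ContinuousLinearMap.proj j : (Fin N → ℂ) →L[ℝ] ℂ))) x :=
    fun j => (hcj j).mul (hasFDerivAt_dot _ x)
  have hfun : (fun γ : Fin N → ℂ => star γ ⬝ᵥ M.mulVec γ)
      = fun γ => ∑ j, (starRingEnd ℂ) (γ j) * ((fun k => M j k) ⬝ᵥ γ) := by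
    funext γ; simp [dotProduct, mulVec, Pi.star_apply, Complex.star_def]
  rw [hfun]
  have hsum := HasFDerivAt.fun_sum (u := Finset.univ) (fun j _ => h j)
  refine hsum.congr_fderiv (Eq.symm ?_)
  ext ε
  simp only [ContinuousLinearMap.add_apply, dotCLM_apply, ContinuousLinearMap.sum_apply,
    ContinuousLinearMap.smul_apply, ContinuousLinearMap.proj_apply, smul_eq_mul,
    ContinuousLinearMap.comp_apply, starPi_apply, ContinuousLinearEquiv.coe_coe,
    Complex.conjCLE_apply]
  rw [Finset.sum_add_distrib]
  congr 1
  · simp only [vecMul, dotProduct, Matrix.transpose_apply, Finset.sum_mul, Finset.mul_sum]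
    rw [Finset.sum_comm]
    exact Finset.sum_congr rfl fun j _ => Finset.sum_congr rfl fun k _ => by
      simp [Pi.star_apply, Complex.star_def]; ring

lemma hasFDerivAt_normSqSum (γi : Fin N → ℂ) :
    HasFDerivAt (fun γ : Fin N → ℂ => ∑ j, (Complex.normSq (γ j - γi j) : ℂ))
      (0 : (Fin N → ℂ) →L[ℝ] ℂ) γi := by
  have h : ∀ j : Fin N, HasFDerivAt
      (fun γ : Fin N → ℂ => (Complex.normSq (γ j - γi j) : ℂ)) (0 : (Fin N → ℂ) →L[ℝ] ℂ) γi := by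
    intro j
    have ht : HasFDerivAt (fun γ : Fin N → ℂ => γ j - γi j)
        (ContinuousLinearMap.proj j : (Fin N → ℂ) →L[ℝ] ℂ) γi :=
      (ContinuousLinearMap.proj j : (Fin N → ℂ) →L[ℝ] ℂ).hasFDerivAt.sub_const _
    have hre : HasFDerivAt (fun γ : Fin N → ℂ => (γ j - γi j).re)
        (Complex.reCLM.comp (ContinuousLinearMap.proj j)) γi :=
      Complex.reCLM.hasFDerivAt.comp γi ht
    have him : HasFDerivAt (fun γ : Fin N → ℂ => (γ j - γi j).im)
        (Complex.imCLM.comp (ContinuousLinearMap.proj j)) γi :=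
      Complex.imCLM.hasFDerivAt.comp γi ht
    have hmul := (hre.mul hre).add (him.mul him)
    have h0 : HasFDerivAt (fun γ : Fin N → ℂ =>
        (γ j - γi j).re * (γ j - γi j).re + (γ j - γi j).im * (γ j - γi j).im)
        (0 : (Fin N → ℂ) →L[ℝ] ℝ) γi := by
      simpa [Pi.mul_def, Pi.add_def] using hmul
    have := Complex.ofRealCLM.hasFDerivAt.comp γi h0
    have heq : (fun γ : Fin N → ℂ => (Complex.normSq (γ j - γi j) : ℂ))
        = fun γ => ((((γ j - γi j).re * (γ j - γi j).re
            + (γ j - γi j).im * (γ j - γi j).im : ℝ)) : ℂ) := by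
      funext γ; rw [Complex.normSq_apply]
    rw [heq]
    exact this
  have hsum := HasFDerivAt.fun_sum (u := Finset.univ) (fun j _ => h j)
  simpa using hsum

lemma vecMulVec_mulVec' (u v y : Fin N → ℂ) :
    (vecMulVec u v).mulVec y = (v ⬝ᵥ y) • u := by
  funext j
  simp only [mulVec, dotProduct, vecMulVec_apply, Pi.smul_apply, smul_eq_mul, Finset.sum_mul]
  exact Finset.sum_congr rfl fun k _ => by ring

lemma star_dot_conjT (M : Matrix (Fin N) (Fin N) ℂ) (x z : Fin N → ℂ) :
    star x ⬝ᵥ Mᴴ.mulVec z = star (star z ⬝ᵥ M.mulVec x) := by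
  simp only [dotProduct, mulVec, conjTranspose_apply, Pi.star_apply, star_sum, star_mul',
    star_star, Finset.mul_sum]
  rw [Finset.sum_comm]
  exact Finset.sum_congr rfl fun j _ => Finset.sum_congr rfl fun k _ => by ring

lemma Qmat_mulVec (q γi : Fin N → ℂ) (B : Matrix (Fin N) (Fin N) ℂ) (y : Fin N → ℂ) :
    (Qmat q γi B).mulVec y
      = ((star q ⬝ᵥ y) + (γi ⬝ᵥ B.mulVec y)) • (q + Bᴴ.mulVec (star γi)) := by
  simp only [Qmat, add_mulVec, ← mulVec_mulVec, vecMulVec_mulVec', mulVec_smul]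
  simp only [smul_add, add_smul]
  abel

lemma Qfact (q γi : Fin N → ℂ) (B : Matrix (Fin N) (Fin N) ℂ) (x y : Fin N → ℂ) :
    star x ⬝ᵥ (Qmat q γi B).mulVec y
      = star (star q ⬝ᵥ x + γi ⬝ᵥ B.mulVec x) * (star q ⬝ᵥ y + γi ⬝ᵥ B.mulVec y) := by
  have h1 : star x ⬝ᵥ q = star (star q ⬝ᵥ x) := star_dotProduct x q
  conv_lhs => rw [Qmat_mulVec, dotProduct_smul, smul_eq_mul, dotProduct_add,
    h1, star_dot_conjT, star_star]
  rw [← star_add, mul_comm]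

end Helpers

/-- The gradients of `f` and of the surrogate `g` with respect to
`(Re γ, Im γ)` coincide at `γ = γ_i`. -/
theorem grad_f_eq_grad_g {N : ℕ} (q γi : Fin N → ℂ) (B : Matrix (Fin N) (Fin N) ℂ)
    (K : ℝ) :
    fderiv ℝ (fun γ : Fin N → ℂ => fObj q B γ) γi =
      fderiv ℝ (fun γ : Fin N → ℂ => (gSurr q γi B K γ).re) γi := by
  classical
  -- the linear map γ ↦ conj
  set cj : ℂ →L[ℝ] ℂ := Complex.conjCLE.toContinuousLinearMap with hcj
  -- derivative of s γ = qᴴγ + γᵀBγ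
  have hs : HasFDerivAt (fun γ : Fin N → ℂ => star q ⬝ᵥ γ + γ ⬝ᵥ B.mulVec γ)
      (dotCLM (star q) + (dotCLM (B.vecMul γi) + dotCLM (B.mulVec γi))) γi :=
    (hasFDerivAt_dot (star q) γi).add (hasFDerivAt_quad B γi)
  have hconj : HasFDerivAt
      (fun γ : Fin N → ℂ => (starRingEnd ℂ) (star q ⬝ᵥ γ + γ ⬝ᵥ B.mulVec γ))
      (cj.comp (dotCLM (star q) + (dotCLM (B.vecMul γi) + dotCLM (B.mulVec γi)))) γi :=
    cj.hasFDerivAt.comp γi hs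
  have hF : HasFDerivAt
      (fun γ : Fin N → ℂ => -((starRingEnd ℂ) (star q ⬝ᵥ γ + γ ⬝ᵥ B.mulVec γ)
          * (star q ⬝ᵥ γ + γ ⬝ᵥ B.mulVec γ)))
      (-((starRingEnd ℂ) (star q ⬝ᵥ γi + γi ⬝ᵥ B.mulVec γi)
            • (dotCLM (star q) + (dotCLM (B.vecMul γi) + dotCLM (B.mulVec γi)))
          + (star q ⬝ᵥ γi + γi ⬝ᵥ B.mulVec γi)
            • cj.comp (dotCLM (star q) + (dotCLM (B.vecMul γi) + dotCLM (B.mulVec γi))))) γi :=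
    (hconj.mul hs).neg
  have hfo : (fun γ : Fin N → ℂ => fObj q B γ)
      = fun γ => (-((starRingEnd ℂ) (star q ⬝ᵥ γ + γ ⬝ᵥ B.mulVec γ)
          * (star q ⬝ᵥ γ + γ ⬝ᵥ B.mulVec γ))).re := by
    funext γ
    rw [fObj, mul_comm, Complex.mul_conj]
    simp
  have hf' : HasFDerivAt (fun γ : Fin N → ℂ => fObj q B γ)
      (Complex.reCLM.comp
        (-((starRingEnd ℂ) (star q ⬝ᵥ γi + γi ⬝ᵥ B.mulVec γi)
            • (dotCLM (star q) + (dotCLM (B.vecMul γi) + dotCLM (B.mulVec γi)))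
          + (star q ⬝ᵥ γi + γi ⬝ᵥ B.mulVec γi)
            • cj.comp (dotCLM (star q) + (dotCLM (B.vecMul γi) + dotCLM (B.mulVec γi)))))) γi := by
    rw [hfo]; exact Complex.reCLM.hasFDerivAt.comp γi hF
  -- pieces of g
  have h1 : HasFDerivAt (fun γ : Fin N → ℂ => -(star γ ⬝ᵥ (Qmat q γi B).mulVec γ))
      (-(dotCLM ((Qmat q γi B).vecMul (star γi))
          + (dotCLM ((Qmat q γi B).mulVec γi)).comp starPi)) γi :=
    (hasFDerivAt_starQuad _ γi).neg
  have h2 : HasFDerivAt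
      (fun γ : Fin N → ℂ => (K : ℂ) * ∑ j, (Complex.normSq (γ j - γi j) : ℂ))
      ((K : ℂ) • (0 : (Fin N → ℂ) →L[ℝ] ℂ)) γi :=
    (hasFDerivAt_normSqSum γi).const_mul _
  have h3 : HasFDerivAt (fun γ : Fin N → ℂ => (star γi ⬝ᵥ q) * (γ ⬝ᵥ B.mulVec γi))
      ((star γi ⬝ᵥ q) • dotCLM (B.mulVec γi)) γi :=
    (hasFDerivAt_dotLeft (B.mulVec γi) γi).const_mul _
  have hw4 : HasFDerivAt (fun γ : Fin N → ℂ => star γi ⬝ᵥ Bᴴ.mulVec (star γ))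
      ((dotCLM (Bᴴ.vecMul (star γi))).comp starPi) γi := by
    have h : (fun γ : Fin N → ℂ => star γi ⬝ᵥ Bᴴ.mulVec (star γ))
        = fun γ : Fin N → ℂ => Bᴴ.vecMul (star γi) ⬝ᵥ star γ := by
      funext γ; rw [dotProduct_mulVec]
    rw [h]; exact hasFDerivAt_dotStar _ γi
  have h4 : HasFDerivAt
      (fun γ : Fin N → ℂ => (star γi ⬝ᵥ Bᴴ.mulVec (star γ)) * (star q ⬝ᵥ γi))
      ((star q ⬝ᵥ γi) • (dotCLM (Bᴴ.vecMul (star γi))).comp starPi) γi :=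
    hw4.mul_const _
  have h5 : HasFDerivAt
      (fun γ : Fin N → ℂ => (star γi ⬝ᵥ Bᴴ.mulVec (star γ)) * (γi ⬝ᵥ B.mulVec γi))
      ((γi ⬝ᵥ B.mulVec γi) • (dotCLM (Bᴴ.vecMul (star γi))).comp starPi) γi :=
    hw4.mul_const _
  have h6 : HasFDerivAt
      (fun γ : Fin N → ℂ => (star γi ⬝ᵥ Bᴴ.mulVec (star γi)) * (γ ⬝ᵥ B.mulVec γi))
      ((star γi ⬝ᵥ Bᴴ.mulVec (star γi)) • dotCLM (B.mulVec γi)) γi :=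
    (hasFDerivAt_dotLeft (B.mulVec γi) γi).const_mul _
  have hG : HasFDerivAt (fun γ : Fin N → ℂ => gSurr q γi B K γ)
      ((((( -(dotCLM ((Qmat q γi B).vecMul (star γi))
          + (dotCLM ((Qmat q γi B).mulVec γi)).comp starPi)
        + (K : ℂ) • (0 : (Fin N → ℂ) →L[ℝ] ℂ))
        - (star γi ⬝ᵥ q) • dotCLM (B.mulVec γi))
        - (star q ⬝ᵥ γi) • (dotCLM (Bᴴ.vecMul (star γi))).comp starPi)
        - (γi ⬝ᵥ B.mulVec γi) • (dotCLM (Bᴴ.vecMul (star γi))).comp starPi)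
        - (star γi ⬝ᵥ Bᴴ.mulVec (star γi)) • dotCLM (B.mulVec γi)) γi := by
    have := ((((h1.add h2).sub h3).sub h4).sub h5).sub h6
    exact this
  have hg' : HasFDerivAt (fun γ : Fin N → ℂ => (gSurr q γi B K γ).re)
      (Complex.reCLM.comp
        ((((( -(dotCLM ((Qmat q γi B).vecMul (star γi))
          + (dotCLM ((Qmat q γi B).mulVec γi)).comp starPi)
        + (K : ℂ) • (0 : (Fin N → ℂ) →L[ℝ] ℂ))
        - (star γi ⬝ᵥ q) • dotCLM (B.mulVec γi))
        - (star q ⬝ᵥ γi) • (dotCLM (Bᴴ.vecMul (star γi))).comp starPi)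
        - (γi ⬝ᵥ B.mulVec γi) • (dotCLM (Bᴴ.vecMul (star γi))).comp starPi)
        - (star γi ⬝ᵥ Bᴴ.mulVec (star γi)) • dotCLM (B.mulVec γi))) γi :=
    Complex.reCLM.hasFDerivAt.comp γi hG
  rw [hf'.fderiv, hg'.fderiv]
  ext ε
  simp only [ContinuousLinearMap.coe_comp', Function.comp_apply,
    ContinuousLinearMap.neg_apply, ContinuousLinearMap.add_apply,
    ContinuousLinearMap.coe_sub', Pi.sub_apply, ContinuousLinearMap.smul_apply,
    ContinuousLinearMap.zero_apply, dotCLM_apply, starPi_apply, smul_eq_mul,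
    Complex.reCLM_apply, hcj, ContinuousLinearEquiv.coe_coe, Complex.conjCLE_apply,
    smul_zero, mul_zero, add_zero]
  -- rewrite the matrix expressions into scalar dot products
  have e1 : (Qmat q γi B).vecMul (star γi) ⬝ᵥ ε
      = star (star q ⬝ᵥ γi + γi ⬝ᵥ B.mulVec γi) * (star q ⬝ᵥ ε + γi ⬝ᵥ B.mulVec ε) := by
    rw [← dotProduct_mulVec, Qfact]
  have e2 : (Qmat q γi B).mulVec γi ⬝ᵥ star ε
      = star (star q ⬝ᵥ ε + γi ⬝ᵥ B.mulVec ε) * (star q ⬝ᵥ γi + γi ⬝ᵥ B.mulVec γi) := by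
    rw [dotProduct_comm, Qfact]
  have e3 : Bᴴ.vecMul (star γi) ⬝ᵥ star ε = star (ε ⬝ᵥ B.mulVec γi) := by
    rw [← dotProduct_mulVec, star_dot_conjT, star_star]
  have e4 : (star γi ⬝ᵥ Bᴴ.mulVec (star γi)) = star (γi ⬝ᵥ B.mulVec γi) := by
    rw [star_dot_conjT, star_star]
  have e5 : (star γi ⬝ᵥ q) = star (star q ⬝ᵥ γi) := star_dotProduct γi q
  have e6 : B.vecMul γi ⬝ᵥ ε = γi ⬝ᵥ B.mulVec ε := (dotProduct_mulVec γi B ε).symm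
  have e7 : B.mulVec γi ⬝ᵥ ε = ε ⬝ᵥ B.mulVec γi := dotProduct_comm _ _
  rw [e1, e2, e3, e4, e5, e6, e7]
  -- now a pure complex-number identity
  generalize star q ⬝ᵥ ε = A
  generalize γi ⬝ᵥ B.mulVec ε = Bv
  generalize ε ⬝ᵥ B.mulVec γi = C
  generalize star q ⬝ᵥ γi = a
  generalize γi ⬝ᵥ B.mulVec γi = b
  simp only [Complex.star_def, map_add, Complex.neg_re, Complex.add_re, Complex.sub_re,
    Complex.mul_re, Complex.add_im, Complex.conj_re, Complex.conj_im]
  ring
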